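/- For ε > 0, let F(ε) = ε²/(ε² + ε²)^{3/2} − (ε + ε³)²/((ε + ε³)² + ε²)^{3/2}. Then F(ε) → 0 as ε → 0⁺, while G(ε) = ε²/(2ε²)^{3/2} → +∞ as ε → 0⁺. -/

import Mathlib

open Filter Topology

theorem flux_difference_limits
    (F G : ℝ → ℝ)
    (hF : ∀ ε : ℝ, F ε = ε ^ 2 / (ε ^ 2 + ε ^ 2) ^ ((3:ℝ)/2)
        - (ε + ε ^ 3) ^ 2 / ((ε + ε ^ 3) ^ 2 + ε ^ 2) ^ ((3:ℝ)/2))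
    (hG : ∀ ε : ℝ, G ε = ε ^ 2 / (2 * ε ^ 2) ^ ((3:ℝ)/2)) :
    Tendsto F (𝓝[>] 0) (𝓝 0) ∧ Tendsto G (𝓝[>] 0) atTop := by
  have h2 : ((2:ℝ) ^ ((3:ℝ)/2)) ≠ 0 := by positivity
  have hneg : (2:ℝ) ^ (-(3:ℝ)/2) = ((2:ℝ) ^ ((3:ℝ)/2))⁻¹ := by
    rw [show (-(3:ℝ)/2) = -(3/2) by norm_num,
      Real.rpow_neg (by norm_num : (0:ℝ) ≤ 2)]
  set φ : ℝ → ℝ := fun t => (2:ℝ) ^ (-(3:ℝ)/2)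
      - (1 + t) ^ 2 / ((1 + t) ^ 2 + 1) ^ ((3:ℝ)/2) with hφdef
  set h : ℝ → ℝ := fun ε => φ (ε ^ 2) with hh
  have h0 : h 0 = 0 := by
    simp only [hh, hφdef]
    rw [hneg]
    norm_num [one_div]
  have hderiv : HasDerivAt h 0 0 := by
    have hin : HasDerivAt (fun ε : ℝ => ε ^ 2) 0 0 := by
      simpa using (hasDerivAt_pow 2 (0:ℝ))
    have hφ : DifferentiableAt ℝ φ 0 := by
      apply DifferentiableAt.sub (differentiableAt_const _)
      apply DifferentiableAt.div
      · fun_prop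
      · apply DifferentiableAt.rpow_const (by fun_prop)
        left; norm_num
      · have : ((1:ℝ) + 0) ^ 2 + 1 = 2 := by norm_num
        rw [this]; positivity
    have := HasDerivAt.comp (h₂ := φ) (h := fun ε : ℝ => ε ^ 2)
      (x := (0:ℝ)) (by
        rw [show ((0:ℝ) ^ 2) = (0:ℝ) by norm_num]
        exact hφ.hasDerivAt) hin
    exact (by simpa using this : HasDerivAt (φ ∘ fun ε : ℝ => ε ^ 2) 0 0)
  -- key rpow identities for ε > 0
  have key : ∀ ε : ℝ, 0 < ε →
      (ε ^ 2) ^ ((3:ℝ)/2) = ε ^ 3 := by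
    intro ε hε
    rw [← Real.rpow_natCast ε 2, ← Real.rpow_mul hε.le,
      ← Real.rpow_natCast ε 3]
    norm_num
  constructor
  · -- F tends to 0
    have hslope : Tendsto (fun ε => h ε / ε) (𝓝[≠] (0:ℝ)) (𝓝 0) := by
      have := hasDerivAt_iff_tendsto_slope.mp hderiv
      refine this.congr' ?_
      filter_upwards [self_mem_nhdsWithin] with ε hε
      simp [slope, h0, div_eq_inv_mul]
    have hslope' : Tendsto (fun ε => h ε / ε) (𝓝[>] (0:ℝ)) (𝓝 0) :=
      hslope.mono_left (nhdsWithin_mono _ fun x hx => ne_of_gt hx)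
    refine hslope'.congr' ?_
    filter_upwards [self_mem_nhdsWithin] with ε hε
    have hε : (0:ℝ) < ε := hε
    have hεne : ε ≠ 0 := ne_of_gt hε
    have hA : (0:ℝ) < (1 + ε ^ 2) ^ 2 + 1 := by positivity
    have hA32 : ((1 + ε ^ 2) ^ 2 + 1) ^ ((3:ℝ)/2) ≠ 0 := by positivity
    have e2 : ((ε + ε ^ 3) ^ 2 + ε ^ 2) ^ ((3:ℝ)/2)
        = ε ^ 3 * ((1 + ε ^ 2) ^ 2 + 1) ^ ((3:ℝ)/2) := by
      rw [show (ε + ε ^ 3) ^ 2 + ε ^ 2 = ε ^ 2 * ((1 + ε ^ 2) ^ 2 + 1) by ring,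
        Real.mul_rpow (sq_nonneg ε) hA.le, key ε hε]
    have e3 : (ε ^ 2 + ε ^ 2) ^ ((3:ℝ)/2) = 2 ^ ((3:ℝ)/2) * ε ^ 3 := by
      rw [show ε ^ 2 + ε ^ 2 = 2 * ε ^ 2 by ring,
        Real.mul_rpow (by norm_num) (sq_nonneg ε), key ε hε]
    rw [hF ε, e2, e3]
    simp only [hh, hφdef, hneg]
    have enum : (ε + ε ^ 3) ^ 2 = ε ^ 2 * (1 + ε ^ 2) ^ 2 := by ring
    rw [enum]
    field_simp
  · -- G tends to atTop
    have hpos : (0:ℝ) < (2:ℝ) ^ (-(3:ℝ)/2) := by positivity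
    have hmain : Tendsto (fun ε : ℝ => (2:ℝ) ^ (-(3:ℝ)/2) * ε⁻¹)
        (𝓝[>] (0:ℝ)) atTop :=
      tendsto_inv_nhdsGT_zero.const_mul_atTop hpos
    refine hmain.congr' ?_
    filter_upwards [self_mem_nhdsWithin] with ε hε
    have hε : (0:ℝ) < ε := hε
    have hεne : ε ≠ 0 := ne_of_gt hε
    rw [hG ε, show (2:ℝ) * ε ^ 2 = ε ^ 2 + ε ^ 2 by ring,
      show (ε ^ 2 + ε ^ 2) ^ ((3:ℝ)/2) = 2 ^ ((3:ℝ)/2) * ε ^ 3 by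
        rw [show ε ^ 2 + ε ^ 2 = 2 * ε ^ 2 by ring,
          Real.mul_rpow (by norm_num) (sq_nonneg ε),
          ← Real.rpow_natCast ε 2, ← Real.rpow_mul hε.le,
          ← Real.rpow_natCast ε 3]
        norm_num, hneg]
    field_simp
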